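/- arXiv:1108.1324 — 2 statements merged into one kernel-verified Lean document; each statement's English description precedes it below -/
import Mathlib

section
/- Let (X,d,μ) be a complete metric measure space with μ Borel regular and doubling, admitting a p-Poincaré inequality with constant L ≥ 1 for some p ≥ 1. Then there is a constant C < ∞, depending only on the doubling constant, L and p, such that for all p₀, q₀ ∈ X with r = d(p₀,q₀) > 0, there is a rectifiable curve of length at most C·r whose initial point lies in B(p₀, r/4) and whose terminal point lies in B(q₀, r/4). -/
open Metric MeasureTheory Filter Set
open scoped NNReal ENNReal
open scoped Topology

/-- The variation of `f` on the ball `B(x,r)`: `sup { |f y - f x| / r : y ∈ B(x,r) }`. -/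
noncomputable def varBall {X : Type*} [MetricSpace X] (f : X → ℝ) (x : X) (r : ℝ) : ℝ :=
  sSup ((fun y => |f y - f x| / r) '' Metric.ball x r)

/-- Lower pointwise Lipschitz constant `lip_x f`. -/
noncomputable def lipLow {X : Type*} [MetricSpace X] (f : X → ℝ) (x : X) : ℝ :=
  Filter.liminf (fun r => varBall f x r) (nhdsWithin 0 (Set.Ioi (0:ℝ)))

/-- Upper pointwise Lipschitz constant `Lip_x f`. -/
noncomputable def lipUp {X : Type*} [MetricSpace X] (f : X → ℝ) (x : X) : ℝ :=
  Filter.limsup (fun r => varBall f x r) (nhdsWithin 0 (Set.Ioi (0:ℝ)))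

/-- `f` is a real-valued Lipschitz function. -/
def IsLip {X : Type*} [MetricSpace X] (f : X → ℝ) : Prop := ∃ K : ℝ≥0, LipschitzWith K f

/-- `μ` is doubling with constant `C`. -/
def DoublingWith {X : Type*} [MetricSpace X] [MeasurableSpace X] (μ : Measure X) (C : ℝ≥0) :
    Prop :=
  ∀ (x : X) (r : ℝ), 0 < r → μ (Metric.ball x (2 * r)) ≤ (C : ℝ≥0∞) * μ (Metric.ball x r)

/-- `(X, μ)` admits a `p`-Poincaré inequality with constant `L`. -/
def PoincareIneq {X : Type*} [MetricSpace X] [MeasurableSpace X] (μ : Measure X) (p L : ℝ) :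
    Prop :=
  (∀ (x : X) (r : ℝ), 0 < r → 0 < μ (Metric.ball x r) ∧ μ (Metric.ball x r) < ⊤) ∧
  ∀ f : X → ℝ, IsLip f → ∀ (x : X) (r : ℝ), 0 < r →
    ⨍ y in Metric.ball x r, |f y - ⨍ z in Metric.ball x r, f z ∂μ| ∂μ ≤
      L * r * (⨍ z in Metric.ball x (L * r), (lipLow f z) ^ p ∂μ) ^ (1 / p)

/-- An `N`-tuple of functions is dependent to first order at `x`. -/
def DependentAt {X : Type*} [MetricSpace X] {N : ℕ} (f : Fin N → X → ℝ) (x : X) : Prop :=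
  ∃ l : Fin N → ℝ, l ≠ 0 ∧ lipUp (fun y => ∑ i, l i * f i y) x = 0

/-- A measurable differentiable structure of dimension at most `N₀`. -/
def HasMDS {X : Type*} [MetricSpace X] [MeasurableSpace X] (μ : Measure X) (N₀ : ℕ) : Prop :=
  ∃ (ι : Type) (_ : Countable ι) (U : ι → Set X) (N : ι → ℕ)
      (φ : (i : ι) → Fin (N i) → X → ℝ),
    (∀ i, MeasurableSet (U i) ∧ 0 < μ (U i)) ∧
    μ (Set.univ \ ⋃ i, U i) = 0 ∧
    (∀ i, N i ≤ N₀) ∧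
    (∀ i k, IsLip (φ i k)) ∧
    (∀ f : X → ℝ, IsLip f → ∀ i, ∃ df : X → (Fin (N i) → ℝ),
      Measurable df ∧
      (∀ᵐ x ∂(μ.restrict (U i)),
        lipUp (fun y => f y - ∑ k, df x k * φ i k y) x = 0) ∧
      ∀ dg : X → (Fin (N i) → ℝ), Measurable dg →
        (∀ᵐ x ∂(μ.restrict (U i)),
          lipUp (fun y => f y - ∑ k, dg x k * φ i k y) x = 0) →
        (∀ᵐ x ∂(μ.restrict (U i)), df x = dg x))

namespace QB

variable {X : Type*} [MetricSpace X]

/-- Infimal length of `ε`-chains from `x` to `y`. -/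
noncomputable def chainDist (ε : ℝ) (x y : X) : ℝ≥0∞ :=
  ⨅ (n : ℕ) (c : ℕ → X) (_ : c 0 = x ∧ c n = y ∧ ∀ i < n, dist (c i) (c (i+1)) ≤ ε),
    ENNReal.ofReal (∑ i ∈ Finset.range n, dist (c i) (c (i+1)))

lemma chainDist_self (ε : ℝ) (x : X) : chainDist ε x x = 0 := by
  refine le_antisymm ?_ zero_le
  have : chainDist ε x x ≤ ENNReal.ofReal (∑ i ∈ Finset.range 0, dist (x : X) x) := by
    refine iInf_le_of_le 0 (iInf_le_of_le (fun _ => x) (iInf_le_of_le ?_ le_rfl))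
    exact ⟨rfl, rfl, by simp⟩
  simpa using this

lemma chainDist_le (ε : ℝ) (x : X) {n : ℕ} {c : ℕ → X} (h0 : c 0 = x) {y : X} (hn : c n = y)
    (hc : ∀ i < n, dist (c i) (c (i+1)) ≤ ε) :
    chainDist ε x y ≤ ENNReal.ofReal (∑ i ∈ Finset.range n, dist (c i) (c (i+1))) :=
  iInf_le_of_le n (iInf_le_of_le c (iInf_le_of_le ⟨h0, hn, hc⟩ le_rfl))

lemma chainDist_step {ε : ℝ} (x : X) {z y : X} (h : dist z y ≤ ε) :
    chainDist ε x y ≤ chainDist ε x z + ENNReal.ofReal (dist z y) := by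
  rcases eq_top_or_lt_top (chainDist ε x z) with ht | ht
  · simp [ht]
  refine ENNReal.le_of_forall_pos_le_add fun δ hδ _ => ?_
  have hlt : chainDist ε x z < chainDist ε x z + δ := by
    exact ENNReal.lt_add_right ht.ne (by exact_mod_cast hδ.ne')
  rw [chainDist] at hlt
  simp only [iInf_lt_iff] at hlt
  obtain ⟨n, c, ⟨h0, hn, hc⟩, hsum⟩ := hlt
  set c' : ℕ → X := fun i => if i ≤ n then c i else y with hc'
  have hc'0 : c' 0 = x := by simp [hc', h0]
  have hc'n : c' (n+1) = y := by simp [hc']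
  have hstep : ∀ i < n + 1, dist (c' i) (c' (i+1)) ≤ ε := by
    intro i hi
    rcases lt_or_eq_of_le (Nat.lt_succ_iff.mp hi) with hi' | hi'
    · have : c' i = c i := by simp [hc', hi'.le]
      have h2 : c' (i+1) = c (i+1) := by simp [hc', Nat.succ_le_of_lt hi']
      rw [this, h2]; exact hc i hi'
    · subst hi'
      have : c' i = c i := by simp [hc']
      have h2 : c' (i+1) = y := by simp [hc']
      rw [this, h2, hn]; exact h
  have hsum' : ∑ i ∈ Finset.range (n+1), dist (c' i) (c' (i+1)) =
      (∑ i ∈ Finset.range n, dist (c i) (c (i+1))) + dist z y := by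
    rw [Finset.sum_range_succ]
    congr 1
    · refine Finset.sum_congr rfl fun i hi => ?_
      have hi' : i < n := Finset.mem_range.mp hi
      have : c' i = c i := by simp [hc', hi'.le]
      have h2 : c' (i+1) = c (i+1) := by simp [hc', Nat.succ_le_of_lt hi']
      rw [this, h2]
    · have : c' n = c n := by simp [hc']
      have h2 : c' (n+1) = y := by simp [hc']
      rw [this, h2, hn]
  calc chainDist ε x y ≤ ENNReal.ofReal (∑ i ∈ Finset.range (n+1), dist (c' i) (c' (i+1))) :=
        chainDist_le ε x hc'0 hc'n hstep
    _ = ENNReal.ofReal (∑ i ∈ Finset.range n, dist (c i) (c (i+1))) + ENNReal.ofReal (dist z y) := by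
        rw [hsum', ENNReal.ofReal_add (Finset.sum_nonneg fun i _ => dist_nonneg) dist_nonneg]
    _ ≤ chainDist ε x z + ↑δ + ENNReal.ofReal (dist z y) := by
        gcongr
        exact hsum.le
    _ = chainDist ε x z + ENNReal.ofReal (dist z y) + ↑δ := by ring

/-- The truncated chain-distance function. -/
noncomputable def cf (ε M : ℝ) (x z : X) : ℝ :=
  (min (chainDist ε x z) (ENNReal.ofReal M)).toReal

lemma cf_nonneg (ε M : ℝ) (x z : X) : 0 ≤ cf ε M x z := ENNReal.toReal_nonneg

lemma cf_le (ε : ℝ) {M : ℝ} (hM : 0 ≤ M) (x z : X) : cf ε M x z ≤ M := by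
  have : min (chainDist ε x z) (ENNReal.ofReal M) ≤ ENNReal.ofReal M := min_le_right _ _
  calc cf ε M x z ≤ (ENNReal.ofReal M).toReal := ENNReal.toReal_mono ENNReal.ofReal_ne_top this
    _ = M := ENNReal.toReal_ofReal hM

lemma cf_self (ε M : ℝ) (x : X) : cf ε M x x = 0 := by
  simp [cf, chainDist_self]

lemma cf_step {ε M : ℝ} (x : X) {z y : X} (h : dist z y ≤ ε) :
    |cf ε M x z - cf ε M x y| ≤ dist z y := by
  have key : ∀ w w' : X, dist w w' ≤ ε → cf ε M x w' ≤ cf ε M x w + dist w w' := by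
    intro w w' hww
    have h1 : min (chainDist ε x w') (ENNReal.ofReal M) ≤
        min (chainDist ε x w) (ENNReal.ofReal M) + ENNReal.ofReal (dist w w') := by
      rcases le_total (chainDist ε x w) (ENNReal.ofReal M) with hle | hle
      · rw [min_eq_left hle]
        exact le_trans (min_le_left _ _) (chainDist_step x hww)
      · rw [min_eq_right hle]
        exact le_trans (min_le_right _ _) (le_add_right le_rfl)
    have hfin : min (chainDist ε x w) (ENNReal.ofReal M) + ENNReal.ofReal (dist w w') ≠ ⊤ :=
      ENNReal.add_ne_top.mpr ⟨ne_top_of_le_ne_top ENNReal.ofReal_ne_top (min_le_right _ _),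
        ENNReal.ofReal_ne_top⟩
    calc cf ε M x w' ≤ (min (chainDist ε x w) (ENNReal.ofReal M) + ENNReal.ofReal (dist w w')).toReal :=
          ENNReal.toReal_mono hfin h1
      _ = cf ε M x w + dist w w' := by
          rw [ENNReal.toReal_add (ENNReal.add_ne_top.mp hfin).1 ENNReal.ofReal_ne_top,
            ENNReal.toReal_ofReal dist_nonneg]
          rfl
  rw [abs_sub_le_iff]
  constructor
  · have := key y z (by rwa [dist_comm])
    rw [dist_comm] at this; linarith
  · have := key z y h; linarith

lemma cf_lipschitz {ε M : ℝ} (hε : 0 < ε) (hM : 0 < M) (x : X) :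
    LipschitzWith (Real.toNNReal (max 1 (M / ε))) (cf ε M x) := by
  apply LipschitzWith.of_dist_le_mul
  intro z w
  rw [Real.dist_eq, Real.coe_toNNReal _ (le_trans zero_le_one (le_max_left _ _))]
  rcases le_or_gt (dist z w) ε with hd | hd
  · calc |cf ε M x z - cf ε M x w| ≤ dist z w := cf_step x hd
      _ ≤ max 1 (M / ε) * dist z w := by
        nlinarith [dist_nonneg (x := z) (y := w), le_max_left 1 (M/ε)]
  · have h1 : |cf ε M x z - cf ε M x w| ≤ M := by
      have := cf_nonneg ε M x z; have := cf_le ε hM.le x z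
      have := cf_nonneg ε M x w; have := cf_le ε hM.le x w
      rw [abs_sub_le_iff]; constructor <;> linarith
    calc |cf ε M x z - cf ε M x w| ≤ M := h1
      _ = (M / ε) * ε := by field_simp
      _ ≤ (M / ε) * dist z w := by
        have : 0 < M / ε := div_pos hM hε
        nlinarith
      _ ≤ max 1 (M / ε) * dist z w := by
        have := dist_nonneg (x := z) (y := w)
        nlinarith [le_max_right 1 (M/ε)]

lemma varBall_cf_le_one {ε M : ℝ} (x : X) (z : X) {r : ℝ} (hr : 0 < r) (hrε : r ≤ ε) :
    varBall (cf ε M x) z r ≤ 1 := by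
  apply Real.sSup_le _ zero_le_one
  rintro t ⟨y, hy, rfl⟩
  rw [div_le_one hr]
  calc |cf ε M x y - cf ε M x z| = |cf ε M x z - cf ε M x y| := abs_sub_comm _ _
    _ ≤ dist z y := cf_step x (le_trans (le_of_lt (mem_ball'.mp hy)) hrε)
    _ ≤ r := le_of_lt (mem_ball'.mp hy)

lemma varBall_nonneg (f : X → ℝ) (z : X) {r : ℝ} (hr : 0 < r) : 0 ≤ varBall f z r := by
  apply Real.sSup_nonneg
  rintro t ⟨y, _, rfl⟩
  positivity


lemma lipLow_cf_bounds {ε M : ℝ} (hε : 0 < ε) (x z : X) :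
    0 ≤ lipLow (cf ε M x) z ∧ lipLow (cf ε M x) z ≤ 1 := by
  set f := cf ε M x
  have hIoc : Ioc (0:ℝ) ε ∈ nhdsWithin (0:ℝ) (Set.Ioi 0) := Ioc_mem_nhdsGT hε
  have hev : ∀ᶠ r in nhdsWithin (0:ℝ) (Set.Ioi 0), varBall f z r ≤ 1 :=
    eventually_of_mem hIoc fun r hr => varBall_cf_le_one x z hr.1 hr.2
  have hev0 : ∀ᶠ r in nhdsWithin (0:ℝ) (Set.Ioi 0), (0:ℝ) ≤ varBall f z r :=
    eventually_of_mem hIoc fun r hr => varBall_nonneg f z hr.1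
  rw [lipLow, liminf_eq]
  have hmem : ∀ a ∈ {a : ℝ | ∀ᶠ r in nhdsWithin (0:ℝ) (Set.Ioi 0), a ≤ varBall f z r}, a ≤ 1 := by
    intro a ha
    rw [Set.mem_setOf_eq] at ha
    obtain ⟨r, h1, h2⟩ := (ha.and hev).exists
    linarith
  constructor
  · exact le_csSup ⟨1, hmem⟩ hev0
  · exact Real.sSup_le hmem zero_le_one

lemma exists_le_two_pow {ε : ℝ} (hε : 0 < ε) (b : ℝ) : ∃ n : ℕ, b ≤ 2 ^ n * ε := by
  obtain ⟨n, hn⟩ := pow_unbounded_of_one_lt (b / ε) (one_lt_two (α := ℝ))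
  exact ⟨n, by rw [div_lt_iff₀ hε] at hn; linarith⟩

section Measure

variable [MeasurableSpace X] [BorelSpace X]

theorem exists_chain (μ : Measure X) {Cμ : ℝ≥0} {L p : ℝ} (hL : 1 ≤ L) (hp : 1 ≤ p)
    (hD : ∀ (z : X) (s : ℝ), 0 < s →
      μ (Metric.ball z (2 * s)) ≤ (Cμ : ℝ≥0∞) * μ (Metric.ball z s))
    (hP1 : ∀ (z : X) (s : ℝ), 0 < s → 0 < μ (Metric.ball z s) ∧ μ (Metric.ball z s) < ⊤)
    (hP2 : ∀ f : X → ℝ, (∃ K : ℝ≥0, LipschitzWith K f) → ∀ (z : X) (s : ℝ), 0 < s →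
      ⨍ y in Metric.ball z s, |f y - ⨍ w in Metric.ball z s, f w ∂μ| ∂μ ≤
        L * s * (⨍ w in Metric.ball z (L * s), (lipLow f w) ^ p ∂μ) ^ (1 / p))
    (x y : X) (hr : 0 < dist x y) {ε : ℝ} (hε : 0 < ε) :
    ∃ (n : ℕ) (c : ℕ → X), c 0 = x ∧ c n = y ∧ (∀ i < n, dist (c i) (c (i+1)) ≤ ε) ∧
      ∑ i ∈ Finset.range n, dist (c i) (c (i+1)) ≤ 33 * (max (Cμ:ℝ) 1)^2 * L * dist x y := by
  set A : ℝ := max (Cμ:ℝ) 1 with hA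
  set r : ℝ := dist x y with hrdef
  have hA1 : 1 ≤ A := le_max_right _ _
  have hA0 : 0 < A := lt_of_lt_of_le one_pos hA1
  have hL0 : 0 < L := lt_of_lt_of_le one_pos hL
  set M : ℝ := 33 * A^2 * L * r with hM
  have hM0 : 0 < M := by positivity
  set f : X → ℝ := cf ε M x with hf
  have hlip : ∃ K : ℝ≥0, LipschitzWith K f := ⟨_, cf_lipschitz hε hM0 x⟩
  have hcont : Continuous f := hlip.choose_spec.continuous
  -- measures of balls
  have hb0 : ∀ (z : X) (s : ℝ), 0 < s → (μ (ball z s)).toReal ≠ 0 := fun z s hs =>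
    ENNReal.toReal_ne_zero.mpr ⟨(hP1 z s hs).1.ne', (hP1 z s hs).2.ne⟩
  have hbpos : ∀ (z : X) (s : ℝ), 0 < s → 0 < (μ (ball z s)).toReal := fun z s hs =>
    lt_of_le_of_ne ENNReal.toReal_nonneg (Ne.symm (hb0 z s hs))
  -- integrability
  have hint : ∀ (z : X) (s : ℝ), 0 < s → IntegrableOn f (ball z s) μ := by
    intro z s hs
    refine Integrable.mono' (g := fun _ => M)
      ((integrableOn_const_iff (C := M)).2 (Or.inr (hP1 z s hs).2)) hcont.aestronglyMeasurable.restrict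
      (Filter.Eventually.of_forall fun w => ?_)
    rw [Real.norm_eq_abs, abs_of_nonneg (cf_nonneg ε M x w)]
    exact cf_le ε hM0.le x w
  -- doubling in real form
  have hDr : ∀ (z : X) (s : ℝ), 0 < s →
      (μ (ball z (2*s))).toReal ≤ A * (μ (ball z s)).toReal := by
    intro z s hs
    have h1 : μ (ball z (2*s)) ≤ (Cμ : ℝ≥0∞) * μ (ball z s) := hD z s hs
    have h2 : ((Cμ : ℝ≥0∞) * μ (ball z s)).toReal = (Cμ:ℝ) * (μ (ball z s)).toReal := by
      rw [ENNReal.toReal_mul, ENNReal.coe_toReal]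
    calc (μ (ball z (2*s))).toReal ≤ ((Cμ : ℝ≥0∞) * μ (ball z s)).toReal :=
          ENNReal.toReal_mono (ENNReal.mul_ne_top ENNReal.coe_ne_top (hP1 z s hs).2.ne) h1
      _ = (Cμ:ℝ) * (μ (ball z s)).toReal := h2
      _ ≤ A * (μ (ball z s)).toReal := by
          have := ENNReal.toReal_nonneg (a := μ (ball z s))
          nlinarith [le_max_left (Cμ:ℝ) 1]
  -- averages: comparison of averages over nested balls
  have hcomp : ∀ (z w : X) (s t : ℝ), 0 < s → 0 < t → ball z s ⊆ ball w t → ∀ c : ℝ,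
      |(⨍ u in ball z s, f u ∂μ) - c| ≤
        ((μ (ball w t)).toReal / (μ (ball z s)).toReal) * ⨍ u in ball w t, |f u - c| ∂μ := by
    intro z w s t hs ht hsub c
    set a' : ℝ := (μ (ball z s)).toReal
    set a : ℝ := (μ (ball w t)).toReal
    have ha' : 0 < a' := hbpos z s hs
    have ha : 0 < a := hbpos w t ht
    have hgB : IntegrableOn (fun u => f u - c) (ball w t) μ :=
      (hint w t ht).sub ((integrableOn_const_iff (C := c)).2 (Or.inr (hP1 w t ht).2))
    have hgB' : IntegrableOn (fun u => f u - c) (ball z s) μ :=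
      (hint z s hs).sub ((integrableOn_const_iff (C := c)).2 (Or.inr (hP1 z s hs).2))
    have habs : IntegrableOn (fun u => |f u - c|) (ball w t) μ := hgB.abs
    have step1 : (⨍ u in ball z s, f u ∂μ) - c = ⨍ u in ball z s, (f u - c) ∂μ := by
      rw [setAverage_eq, setAverage_eq, integral_sub (hint z s hs)
        ((integrableOn_const_iff (C := c)).2 (Or.inr (hP1 z s hs).2)), setIntegral_const]
      simp only [smul_eq_mul]
      field_simp [show μ.real (ball z s) ≠ 0 from hb0 z s hs]
    rw [step1]
    have step2 : |⨍ u in ball z s, (f u - c) ∂μ| ≤ a'⁻¹ * ∫ u in ball w t, |f u - c| ∂μ := by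
      rw [setAverage_eq]
      simp only [smul_eq_mul, measureReal_def, abs_mul, abs_inv, abs_of_nonneg (hbpos z s hs).le]
      have h1 : |∫ u in ball z s, (f u - c) ∂μ| ≤ ∫ u in ball z s, |f u - c| ∂μ := by
        simpa [Real.norm_eq_abs] using
          norm_integral_le_integral_norm (μ := μ.restrict (ball z s)) (fun u => f u - c)
      have h2 : ∫ u in ball z s, |f u - c| ∂μ ≤ ∫ u in ball w t, |f u - c| ∂μ := by
        refine setIntegral_mono_set habs ?_ (HasSubset.Subset.eventuallyLE hsub)
        exact Filter.Eventually.of_forall fun u => abs_nonneg _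
      have := le_trans h1 h2
      gcongr
    refine le_trans step2 ?_
    rw [setAverage_eq]
    simp only [smul_eq_mul, measureReal_def]
    rw [div_mul_eq_mul_div, mul_comm a, mul_div_assoc, mul_comm a⁻¹, mul_assoc]
    rw [div_eq_mul_inv]
    apply le_of_eq
    field_simp
  -- Poincaré in usable form
  have hpoi : ∀ (z : X) (s : ℝ), 0 < s →
      ⨍ u in ball z s, |f u - ⨍ v in ball z s, f v ∂μ| ∂μ ≤ L * s := by
    intro z s hs
    have hLs : 0 < L * s := mul_pos hL0 hs
    have hT0 : 0 ≤ ⨍ w in ball z (L * s), (lipLow f w) ^ p ∂μ := by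
      rw [setAverage_eq]
      simp only [smul_eq_mul]
      have : 0 ≤ ∫ w in ball z (L*s), (lipLow f w) ^ p ∂μ :=
        integral_nonneg fun w => Real.rpow_nonneg (lipLow_cf_bounds hε x w).1 p
      positivity
    have hT1 : ⨍ w in ball z (L * s), (lipLow f w) ^ p ∂μ ≤ 1 := by
      rw [setAverage_eq]
      simp only [smul_eq_mul]
      have hle : ∫ w in ball z (L*s), (lipLow f w) ^ p ∂μ ≤
          ∫ _ in ball z (L*s), (1:ℝ) ∂μ := by
        refine integral_mono_of_nonneg
          (Filter.Eventually.of_forall fun w => Real.rpow_nonneg (lipLow_cf_bounds hε x w).1 p)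
          ((integrableOn_const_iff (C := (1:ℝ))).2 (Or.inr (hP1 z (L*s) hLs).2))
          (Filter.Eventually.of_forall fun w => ?_)
        exact Real.rpow_le_one (lipLow_cf_bounds hε x w).1 (lipLow_cf_bounds hε x w).2
          (by positivity)
      rw [setIntegral_const, smul_eq_mul, mul_one] at hle
      calc (μ (ball z (L*s))).toReal⁻¹ * ∫ w in ball z (L*s), (lipLow f w) ^ p ∂μ ≤
            (μ (ball z (L*s))).toReal⁻¹ * (μ (ball z (L*s))).toReal := by
            have : 0 ≤ (μ (ball z (L*s))).toReal⁻¹ := by positivity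
            exact mul_le_mul_of_nonneg_left hle this
        _ = 1 := inv_mul_cancel₀ (hb0 z (L*s) hLs)
    calc ⨍ u in ball z s, |f u - ⨍ v in ball z s, f v ∂μ| ∂μ ≤
          L * s * (⨍ w in ball z (L * s), (lipLow f w) ^ p ∂μ) ^ (1 / p) := hP2 f hlip z s hs
      _ ≤ L * s * 1 := by
          refine mul_le_mul_of_nonneg_left ?_ hLs.le
          exact Real.rpow_le_one hT0 hT1 (by positivity)
      _ = L * s := mul_one _
  -- average is within s of f z at small scales; telescoping
  have havg_nonneg : ∀ (z : X) (s : ℝ) (c : ℝ), 0 ≤ ⨍ u in ball z s, |f u - c| ∂μ := by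
    intro z s c
    rw [setAverage_eq]
    simp only [smul_eq_mul]
    have : 0 ≤ ∫ u in ball z s, |f u - c| ∂μ := integral_nonneg fun u => abs_nonneg _
    positivity
  have htel : ∀ (n : ℕ) (z : X) (s : ℝ), 0 < s → s ≤ 2^n * ε →
      |f z - ⨍ u in ball z s, f u ∂μ| ≤ 2 * A * L * s := by
    intro n
    induction n with
    | zero =>
      intro z s hs hsε
      rw [pow_zero, one_mul] at hsε
      have h1 : |(⨍ u in ball z s, f u ∂μ) - f z| ≤
          ((μ (ball z s)).toReal / (μ (ball z s)).toReal) * ⨍ u in ball z s, |f u - f z| ∂μ :=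
        hcomp z z s s hs hs (subset_refl _) (f z)
      rw [div_self (hb0 z s hs), one_mul] at h1
      have h2 : ⨍ u in ball z s, |f u - f z| ∂μ ≤ s := by
        rw [setAverage_eq]
        simp only [smul_eq_mul]
        have hle : ∫ u in ball z s, |f u - f z| ∂μ ≤ ∫ _ in ball z s, s ∂μ := by
          refine integral_mono_of_nonneg (Filter.Eventually.of_forall fun u => abs_nonneg _)
            ((integrableOn_const_iff (C := s)).2 (Or.inr (hP1 z s hs).2)) ?_
          refine (ae_restrict_mem measurableSet_ball).mono fun u hu => ?_
          have hd : dist z u ≤ ε := le_trans (le_of_lt (mem_ball'.mp hu)) hsε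
          calc |f u - f z| = |f z - f u| := abs_sub_comm _ _
            _ ≤ dist z u := cf_step x hd
            _ ≤ s := (mem_ball'.mp hu).le
        rw [setIntegral_const, smul_eq_mul] at hle
        calc (μ (ball z s)).toReal⁻¹ * ∫ u in ball z s, |f u - f z| ∂μ ≤
              (μ (ball z s)).toReal⁻¹ * ((μ (ball z s)).toReal * s) :=
              mul_le_mul_of_nonneg_left hle (by positivity)
          _ = s := by rw [← mul_assoc, inv_mul_cancel₀ (hb0 z s hs), one_mul]
      have h3 := le_trans h1 h2
      rw [abs_sub_comm] at h3
      have h2AL : 1 ≤ 2 * A * L := by nlinarith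
      calc |f z - ⨍ u in ball z s, f u ∂μ| ≤ s := h3
        _ = 1 * s := (one_mul s).symm
        _ ≤ (2 * A * L) * s := mul_le_mul_of_nonneg_right h2AL hs.le
    | succ n ih =>
      intro z s hs hsε
      have hs2 : 0 < s/2 := by linarith
      have hs2ε : s/2 ≤ 2^n * ε := by
        rw [pow_succ] at hsε; nlinarith
      have h1 : |f z - ⨍ u in ball z (s/2), f u ∂μ| ≤ 2 * A * L * (s/2) := ih z (s/2) hs2 hs2ε
      have hsub : ball z (s/2) ⊆ ball z s := ball_subset_ball (by linarith)
      have h2 : |(⨍ u in ball z (s/2), f u ∂μ) - ⨍ u in ball z s, f u ∂μ| ≤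
          ((μ (ball z s)).toReal / (μ (ball z (s/2))).toReal) *
            ⨍ u in ball z s, |f u - ⨍ v in ball z s, f v ∂μ| ∂μ :=
        hcomp z z (s/2) s hs2 hs hsub _
      have hratio : (μ (ball z s)).toReal / (μ (ball z (s/2))).toReal ≤ A := by
        rw [div_le_iff₀ (hbpos z (s/2) hs2)]
        have := hDr z (s/2) hs2
        rw [show 2 * (s/2) = s by ring] at this
        linarith
      have h3 : ((μ (ball z s)).toReal / (μ (ball z (s/2))).toReal) *
          (⨍ u in ball z s, |f u - ⨍ v in ball z s, f v ∂μ| ∂μ) ≤ A * (L * s) := by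
        refine mul_le_mul hratio (hpoi z s hs) (havg_nonneg _ _ _) hA0.le
      calc |f z - ⨍ u in ball z s, f u ∂μ| ≤
            |f z - ⨍ u in ball z (s/2), f u ∂μ| +
              |(⨍ u in ball z (s/2), f u ∂μ) - ⨍ u in ball z s, f u ∂μ| := by
            have := abs_sub_abs_le_abs_sub (f z) (0:ℝ)
            exact abs_sub_le _ _ _
        _ ≤ 2 * A * L * (s/2) + A * (L * s) := add_le_add h1 (le_trans h2 h3)
        _ = 2 * A * L * s := by ring
  -- conclude: |f y| ≤ 32 A² L r
  have hfy : |f y| ≤ 32 * A^2 * L * r := by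
    obtain ⟨n₁, hn₁⟩ := exists_le_two_pow hε (4*r)
    obtain ⟨n₂, hn₂⟩ := exists_le_two_pow hε (8*r)
    have h4r : 0 < 4*r := by linarith
    have h8r : 0 < 8*r := by linarith
    have h1 : |f x - ⨍ u in ball x (4*r), f u ∂μ| ≤ 2*A*L*(4*r) := htel n₁ x (4*r) h4r hn₁
    have h2 : |f y - ⨍ u in ball y (8*r), f u ∂μ| ≤ 2*A*L*(8*r) := htel n₂ y (8*r) h8r hn₂
    have hsub : ball x (4*r) ⊆ ball y (8*r) := by
      intro u hu
      have : dist u x < 4*r := mem_ball.mp hu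
      have : dist u y ≤ dist u x + dist x y := dist_triangle _ _ _
      rw [mem_ball]
      linarith
    have h3 : |(⨍ u in ball x (4*r), f u ∂μ) - ⨍ u in ball y (8*r), f u ∂μ| ≤
        ((μ (ball y (8*r))).toReal / (μ (ball x (4*r))).toReal) *
          ⨍ u in ball y (8*r), |f u - ⨍ v in ball y (8*r), f v ∂μ| ∂μ :=
      hcomp x y (4*r) (8*r) h4r h8r hsub _
    have hsub2 : ball y (8*r) ⊆ ball x (16*r) := by
      intro u hu
      have h' : dist u y < 8*r := mem_ball.mp hu
      have : dist u x ≤ dist u y + dist y x := dist_triangle _ _ _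
      rw [mem_ball]
      rw [dist_comm y x] at this
      linarith
    have hratio : (μ (ball y (8*r))).toReal / (μ (ball x (4*r))).toReal ≤ A^2 := by
      rw [div_le_iff₀ (hbpos x (4*r) h4r)]
      have m1 : (μ (ball y (8*r))).toReal ≤ (μ (ball x (16*r))).toReal :=
        ENNReal.toReal_mono (hP1 x (16*r) (by linarith)).2.ne (measure_mono hsub2)
      have m2 : (μ (ball x (16*r))).toReal ≤ A * (μ (ball x (8*r))).toReal := by
        have := hDr x (8*r) h8r
        rw [show (2:ℝ) * (8*r) = 16*r by ring] at this
        exact this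
      have m3 : (μ (ball x (8*r))).toReal ≤ A * (μ (ball x (4*r))).toReal := by
        have := hDr x (4*r) h4r
        rw [show (2:ℝ) * (4*r) = 8*r by ring] at this
        exact this
      nlinarith [ENNReal.toReal_nonneg (a := μ (ball x (8*r)))]
    have h3' : |(⨍ u in ball x (4*r), f u ∂μ) - ⨍ u in ball y (8*r), f u ∂μ| ≤ A^2 * (L*(8*r)) :=
      le_trans h3 (mul_le_mul hratio (hpoi y (8*r) h8r) (havg_nonneg _ _ _) (by positivity))
    have hfx : f x = 0 := cf_self ε M x
    have e1 : |⨍ u in ball x (4*r), f u ∂μ| ≤ 2*A*L*(4*r) := by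
      rw [hfx] at h1
      rw [abs_sub_comm] at h1
      simpa using h1
    rw [abs_sub_comm] at h3'
    have key : |f y| ≤ |f y - ⨍ u in ball y (8*r), f u ∂μ| +
        |(⨍ u in ball y (8*r), f u ∂μ) - ⨍ u in ball x (4*r), f u ∂μ| +
        |⨍ u in ball x (4*r), f u ∂μ| := by
      have t1 : f y = (f y - ⨍ u in ball y (8*r), f u ∂μ) +
          ((⨍ u in ball y (8*r), f u ∂μ) - ⨍ u in ball x (4*r), f u ∂μ) +
          ⨍ u in ball x (4*r), f u ∂μ := by ring
      calc |f y| = |(f y - ⨍ u in ball y (8*r), f u ∂μ) +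
          ((⨍ u in ball y (8*r), f u ∂μ) - ⨍ u in ball x (4*r), f u ∂μ) +
          ⨍ u in ball x (4*r), f u ∂μ| := by rw [← t1]
        _ ≤ _ := by
          refine le_trans (abs_add_le _ _) ?_
          gcongr
          exact abs_add_le _ _
    nlinarith [key, h2, h3', e1,
      mul_nonneg (mul_nonneg hL0.le hr.le) (mul_nonneg (sub_nonneg.mpr hA1) hA0.le)]
  -- contradiction argument
  have hlt : chainDist ε x y < ENNReal.ofReal M := by
    by_contra hge
    push_neg at hge
    have : f y = M := by
      rw [hf, cf, min_eq_right hge, ENNReal.toReal_ofReal hM0.le]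
    rw [this, abs_of_nonneg hM0.le] at hfy
    rw [hM] at this
    nlinarith
  rw [chainDist] at hlt
  simp only [iInf_lt_iff] at hlt
  obtain ⟨n, c, ⟨h0, hn, hc⟩, hsum⟩ := hlt
  refine ⟨n, c, h0, hn, hc, ?_⟩
  rw [ENNReal.ofReal_lt_ofReal_iff hM0] at hsum
  rw [hM] at hsum
  exact hsum.le

end Measure

section Proper

variable [MeasurableSpace X] [BorelSpace X]

theorem proper_of_doubling [CompleteSpace X] (μ : Measure X) {Cμ : ℝ≥0}
    (hD : ∀ (z : X) (s : ℝ), 0 < s →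
      μ (Metric.ball z (2 * s)) ≤ (Cμ : ℝ≥0∞) * μ (Metric.ball z s))
    (hP1 : ∀ (z : X) (s : ℝ), 0 < s → 0 < μ (Metric.ball z s) ∧ μ (Metric.ball z s) < ⊤) :
    ProperSpace X := by
  classical
  have hDk : ∀ (z : X) (s : ℝ) (k : ℕ), 0 < s →
      μ (ball z (2^k * s)) ≤ (Cμ : ℝ≥0∞)^k * μ (ball z s) := by
    intro z s k hs
    induction k with
    | zero => simp
    | succ k ih =>
      have h1 : (2:ℝ)^(k+1) * s = 2 * (2^k * s) := by ring
      rw [h1]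
      calc μ (ball z (2 * (2^k * s))) ≤ (Cμ : ℝ≥0∞) * μ (ball z (2^k * s)) :=
            hD z (2^k * s) (by positivity)
        _ ≤ (Cμ : ℝ≥0∞) * ((Cμ : ℝ≥0∞)^k * μ (ball z s)) := mul_le_mul_right ih _
        _ = (Cμ : ℝ≥0∞)^(k+1) * μ (ball z s) := by rw [pow_succ]; ring
  have htb : ∀ (x : X) (R : ℝ), TotallyBounded (ball x R) := by
    intro x R
    rcases le_or_gt R 0 with hR | hR
    · rw [ball_eq_empty.mpr hR]; exact totallyBounded_empty
    rw [Metric.totallyBounded_iff]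
    intro δ hδ
    by_contra hcon
    push_neg at hcon
    have hex : ∀ s : Finset X, (∀ z ∈ s, z ∈ ball x R) → ∃ z, z ∈ ball x R ∧
        ∀ w ∈ s, δ ≤ dist w z := by
      intro s hs
      have := hcon (↑s) s.finite_toSet
      rw [Set.not_subset] at this
      obtain ⟨z, hz1, hz2⟩ := this
      refine ⟨z, hz1, fun w hw => ?_⟩
      by_contra hlt
      push_neg at hlt
      exact hz2 (Set.mem_biUnion hw (mem_ball.mpr (by rw [dist_comm]; exact hlt)))
    obtain ⟨u, hu, hsep⟩ := exists_seq_of_forall_finset_exists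
      (fun z => z ∈ ball x R) (fun a b => δ ≤ dist a b) hex
    -- disjoint balls of radius δ/2
    have hδ2 : 0 < δ/2 := by linarith
    have hdisj : Pairwise (Function.onFun Disjoint fun n => ball (u n) (δ/2)) := by
      intro m n hmn
      have hd : δ ≤ dist (u m) (u n) := by
        rcases lt_or_gt_of_ne hmn with h | h
        · exact hsep m n h
        · rw [dist_comm]; exact hsep n m h
      exact ball_disjoint_ball (by linarith)
    obtain ⟨k, hk⟩ := exists_le_two_pow hδ2 (2*R)
    have hCne : (Cμ : ℝ≥0∞) ≠ 0 := by
      intro h0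
      have h1 := hD x 1 one_pos
      rw [h0, zero_mul] at h1
      norm_num at h1
      exact absurd h1 (hP1 x 2 two_pos).1.ne'
    set η : ℝ≥0∞ := μ (ball x R) / (Cμ : ℝ≥0∞)^k with hη
    have hη0 : η ≠ 0 := by
      simp only [hη, ne_eq, ENNReal.div_eq_zero_iff, not_or]
      exact ⟨(hP1 x R hR).1.ne', ENNReal.pow_ne_top ENNReal.coe_ne_top⟩
    have hlow : ∀ n, η ≤ μ (ball (u n) (δ/2)) := by
      intro n
      refine ENNReal.div_le_of_le_mul ?_
      have hsub : ball x R ⊆ ball (u n) (2^k * (δ/2)) := by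
        intro z hz
        have h1 : dist z x < R := mem_ball.mp hz
        have h2 : dist x (u n) < R := mem_ball'.mp (hu n)
        have := dist_triangle z x (u n)
        rw [mem_ball]
        linarith
      calc μ (ball x R) ≤ μ (ball (u n) (2^k * (δ/2))) := measure_mono hsub
        _ ≤ (Cμ : ℝ≥0∞)^k * μ (ball (u n) (δ/2)) := hDk (u n) (δ/2) k hδ2
        _ = μ (ball (u n) (δ/2)) * (Cμ : ℝ≥0∞)^k := mul_comm _ _
    have hsubU : (⋃ n, ball (u n) (δ/2)) ⊆ ball x (R + δ) := by
      refine Set.iUnion_subset fun n z hz => ?_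
      have h1 : dist z (u n) < δ/2 := mem_ball.mp hz
      have h2 : dist (u n) x < R := mem_ball.mp (hu n)
      have := dist_triangle z (u n) x
      rw [mem_ball]
      linarith
    have htop : μ (ball x (R + δ)) = ⊤ := by
      have h1 : (⊤ : ℝ≥0∞) ≤ μ (⋃ n, ball (u n) (δ/2)) := by
        rw [measure_iUnion hdisj (fun n => measurableSet_ball)]
        calc (⊤ : ℝ≥0∞) = ∑' _ : ℕ, η := (ENNReal.tsum_const_eq_top_of_ne_zero hη0).symm
          _ ≤ ∑' n, μ (ball (u n) (δ/2)) := ENNReal.tsum_le_tsum hlow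
      exact top_le_iff.mp (le_trans (le_trans h1 (measure_mono hsubU)) le_rfl)
    exact absurd htop (hP1 x (R+δ) (by linarith)).2.ne
  constructor
  intro x R
  refine TotallyBounded.isCompact_of_isClosed ?_ isClosed_closedBall
  exact (htb x (R+1)).subset (closedBall_subset_ball (by linarith))

end Proper

section Curve

theorem main_curve {X : Type} [MetricSpace X] [CompleteSpace X] [MeasurableSpace X] [BorelSpace X]
    (μ : Measure X) {Cμ : ℝ≥0} {L p : ℝ} (hL : 1 ≤ L) (hp : 1 ≤ p)
    (hD : ∀ (z : X) (s : ℝ), 0 < s →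
      μ (Metric.ball z (2 * s)) ≤ (Cμ : ℝ≥0∞) * μ (Metric.ball z s))
    (hP1 : ∀ (z : X) (s : ℝ), 0 < s → 0 < μ (Metric.ball z s) ∧ μ (Metric.ball z s) < ⊤)
    (hP2 : ∀ f : X → ℝ, (∃ K : ℝ≥0, LipschitzWith K f) → ∀ (z : X) (s : ℝ), 0 < s →
      ⨍ y in Metric.ball z s, |f y - ⨍ w in Metric.ball z s, f w ∂μ| ∂μ ≤
        L * s * (⨍ w in Metric.ball z (L * s), (lipLow f w) ^ p ∂μ) ^ (1 / p))
    (p₀ q₀ : X) (hdist : 0 < dist p₀ q₀) :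
    ∃ γ : ℝ → X,
      ContinuousOn γ (Set.Icc 0 1) ∧
      γ 0 ∈ Metric.ball p₀ (dist p₀ q₀ / 4) ∧
      γ 1 ∈ Metric.ball q₀ (dist p₀ q₀ / 4) ∧
      eVariationOn γ (Set.Icc 0 1) ≤
        ENNReal.ofReal ((33 * (max (Cμ:ℝ) 1)^2 * L) * dist p₀ q₀) := by
  classical
  have hproper : ProperSpace X := proper_of_doubling μ hD hP1
  set A : ℝ := max (Cμ:ℝ) 1 with hA
  set r : ℝ := dist p₀ q₀ with hrdef
  have hA1 : 1 ≤ A := le_max_right _ _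
  have hL0 : 0 < L := lt_of_lt_of_le one_pos hL
  set B : ℝ := 33 * A^2 * L * r with hB
  have hB0 : 0 < B := by
    have : 0 < A := lt_of_lt_of_le one_pos hA1
    positivity
  have hchain : ∀ n : ℕ, ∃ (m : ℕ) (c : ℕ → X), c 0 = p₀ ∧ c m = q₀ ∧
      (∀ i < m, dist (c i) (c (i+1)) ≤ 1/((n:ℝ)+1)) ∧
      ∑ i ∈ Finset.range m, dist (c i) (c (i+1)) ≤ B := fun n =>
    exists_chain μ hL hp hD hP1 hP2 p₀ q₀ hdist (ε := 1/((n:ℝ)+1)) (by positivity)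
  choose m c h0 hm hstep hsum using hchain
  set T : ℕ → ℕ → ℝ := fun n j => ∑ i ∈ Finset.range j, dist (c n i) (c n (i+1)) with hT
  have hTmono : ∀ n i j, i ≤ j → T n i ≤ T n j := fun n i j hij =>
    Finset.sum_le_sum_of_subset_of_nonneg (Finset.range_subset_range.mpr hij)
      (fun _ _ _ => dist_nonneg)
  have hT0 : ∀ n, T n 0 = 0 := by intro n; simp [hT]
  have hdistT : ∀ n i j, i ≤ j → dist (c n i) (c n j) ≤ T n j - T n i := by
    intro n i j hij
    induction j, hij using Nat.le_induction with
    | base => simp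
    | succ j hij ih =>
      have hTs : T n (j+1) = T n j + dist (c n j) (c n (j+1)) := Finset.sum_range_succ _ _
      calc dist (c n i) (c n (j+1)) ≤ dist (c n i) (c n j) + dist (c n j) (c n (j+1)) :=
            dist_triangle _ _ _
        _ ≤ (T n j - T n i) + dist (c n j) (c n (j+1)) := by linarith
        _ = T n (j+1) - T n i := by rw [hTs]; ring
  set τ : ℝ → ℝ := fun t => max 0 (min 1 t) with hτ
  have hτ01 : ∀ t, 0 ≤ τ t ∧ τ t ≤ 1 := fun t =>
    ⟨le_max_left _ _, max_le zero_le_one (min_le_left _ _)⟩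
  have hτ0 : τ 0 = 0 := by simp [hτ]
  have hτ1 : τ 1 = 1 := by norm_num [hτ]
  have hτid : ∀ t ∈ Set.Icc (0:ℝ) 1, τ t = t := by
    intro t ht
    rw [hτ]
    simp only
    rw [min_eq_right ht.2, max_eq_right ht.1]
  set idx : ℕ → ℝ → ℕ := fun n t => Nat.findGreatest (fun j => T n j ≤ τ t * B) (m n) with hidx
  set g : ℕ → ℝ → X := fun n t => c n (idx n t) with hg
  have hP0 : ∀ (n : ℕ) (t : ℝ), T n 0 ≤ τ t * B := by
    intro n t
    rw [hT0]
    exact mul_nonneg (hτ01 t).1 hB0.le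
  have hidx_le : ∀ n t, idx n t ≤ m n := fun n t => Nat.findGreatest_le _
  have hidx_spec : ∀ n t, T n (idx n t) ≤ τ t * B := by
    intro n t
    have h := Nat.findGreatest_spec (P := fun j => T n j ≤ τ t * B)
      (Nat.zero_le (m n)) (hP0 n t)
    simpa [hidx] using h
  have hkey : ∀ (n : ℕ) (s t : ℝ), τ s ≤ τ t →
      dist (g n s) (g n t) ≤ B * (τ t - τ s) + 1/((n:ℝ)+1) := by
    intro n s t hst
    have hij : idx n s ≤ idx n t := by
      apply Nat.le_findGreatest (hidx_le n s)
      calc T n (idx n s) ≤ τ s * B := hidx_spec n s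
        _ ≤ τ t * B := mul_le_mul_of_nonneg_right hst hB0.le
    rcases eq_or_lt_of_le hij with heq | hlt
    · have : g n s = g n t := by rw [hg]; simp only; rw [heq]
      rw [this, dist_self]
      have h1 : 0 ≤ B * (τ t - τ s) := mul_nonneg hB0.le (by linarith)
      have h2 : 0 < 1/((n:ℝ)+1) := by positivity
      linarith
    · have him : idx n s < m n := lt_of_lt_of_le hlt (hidx_le n t)
      have hnot : ¬ (T n (idx n s + 1) ≤ τ s * B) :=
        Nat.findGreatest_is_greatest (Nat.lt_succ_self _) him
      push_neg at hnot
      have hTsucc : T n (idx n s + 1) = T n (idx n s) +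
          dist (c n (idx n s)) (c n (idx n s + 1)) := Finset.sum_range_succ _ _
      have hstepb : dist (c n (idx n s)) (c n (idx n s + 1)) ≤ 1/((n:ℝ)+1) := hstep n _ him
      have h1 : dist (g n s) (g n t) ≤ T n (idx n t) - T n (idx n s) := hdistT n _ _ hij
      have h2 : T n (idx n t) ≤ τ t * B := hidx_spec n t
      linarith
  have hrange : ∀ n t, g n t ∈ closedBall p₀ B := by
    intro n t
    rw [mem_closedBall, dist_comm]
    have h1 : dist (c n 0) (c n (idx n t)) ≤ T n (idx n t) - T n 0 := hdistT n 0 _ (Nat.zero_le _)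
    rw [hT0] at h1
    have h2 : T n (idx n t) ≤ τ t * B := hidx_spec n t
    have h3 : τ t * B ≤ B := by
      have := (hτ01 t).2
      nlinarith [(hτ01 t).1]
    calc dist p₀ (g n t) = dist (c n 0) (c n (idx n t)) := by rw [h0 n]
      _ ≤ B := by linarith
  have hg0 : ∀ n, g n 0 = p₀ := by
    intro n
    have h1 : dist (c n 0) (c n (idx n 0)) ≤ T n (idx n 0) - T n 0 := hdistT n 0 _ (Nat.zero_le _)
    have h2 : T n (idx n 0) ≤ τ 0 * B := hidx_spec n 0
    rw [hτ0, zero_mul] at h2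
    rw [hT0] at h1
    have hd0 : dist (c n 0) (c n (idx n 0)) = 0 := le_antisymm (by linarith) dist_nonneg
    have : c n (idx n 0) = c n 0 := (eq_of_dist_eq_zero hd0).symm
    rw [hg]; simp only; rw [this, h0 n]
  have hg1 : ∀ n, g n 1 = q₀ := by
    intro n
    have hidx1 : idx n 1 = m n := le_antisymm (hidx_le n 1)
      (Nat.le_findGreatest le_rfl (by rw [hτ1, one_mul]; exact hsum n))
    rw [hg]; simp only; rw [hidx1, hm n]
  obtain ⟨𝒰, h𝒰⟩ := Ultrafilter.exists_le (atTop : Filter ℕ)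
  have hcpt : IsCompact (closedBall p₀ B) := isCompact_closedBall p₀ B
  have hlim : ∀ t : ℝ, ∃ a ∈ closedBall p₀ B, Tendsto (fun n => g n t) 𝒰 (𝓝 a) := by
    intro t
    have hprin : ↑(𝒰.map (fun n => g n t)) ≤ Filter.principal (closedBall p₀ B) := by
      rw [Ultrafilter.coe_map]
      exact le_principal_iff.mpr (Filter.mem_map.mpr
        (Filter.univ_mem' (fun n => hrange n t)))
    obtain ⟨a, ha, hle⟩ := isCompact_iff_ultrafilter_le_nhds.mp hcpt
      (𝒰.map (fun n => g n t)) hprin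
    exact ⟨a, ha, by rwa [Ultrafilter.coe_map] at hle⟩
  choose γ hγmem hγ using hlim
  have hγ0 : γ 0 = p₀ := by
    have h1 : Tendsto (fun _ : ℕ => p₀) 𝒰 (𝓝 (γ 0)) := by
      have := hγ 0
      simpa [hg0] using this
    exact tendsto_nhds_unique h1 tendsto_const_nhds
  have hγ1 : γ 1 = q₀ := by
    have h1 : Tendsto (fun _ : ℕ => q₀) 𝒰 (𝓝 (γ 1)) := by
      have := hγ 1
      simpa [hg1] using this
    exact tendsto_nhds_unique h1 tendsto_const_nhds
  have hdistγ : ∀ s t : ℝ, τ s ≤ τ t → dist (γ s) (γ t) ≤ B * (τ t - τ s) := by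
    intro s t hst
    have htend : Tendsto (fun n => dist (g n s) (g n t)) 𝒰 (𝓝 (dist (γ s) (γ t))) :=
      (hγ s).dist (hγ t)
    have htend2 : Tendsto (fun n : ℕ => B * (τ t - τ s) + 1/((n:ℝ)+1)) atTop
        (𝓝 (B * (τ t - τ s) + 0)) :=
      tendsto_const_nhds.add tendsto_one_div_add_atTop_nhds_zero_nat
    rw [add_zero] at htend2
    exact le_of_tendsto_of_tendsto' htend (htend2.mono_left h𝒰) (fun n => hkey n s t hst)
  have hlips : LipschitzOnWith (Real.toNNReal B) γ (Set.Icc 0 1) := by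
    apply LipschitzOnWith.of_dist_le_mul
    intro s hs t ht
    rw [Real.coe_toNNReal _ hB0.le]
    rcases le_total (τ s) (τ t) with h | h
    · calc dist (γ s) (γ t) ≤ B * (τ t - τ s) := hdistγ s t h
        _ ≤ B * dist s t := by
          rw [hτid s hs, hτid t ht] at *
          rw [Real.dist_eq]
          have : t - s ≤ |s - t| := by rw [abs_sub_comm]; exact le_abs_self _
          nlinarith
    · rw [dist_comm]
      calc dist (γ t) (γ s) ≤ B * (τ s - τ t) := hdistγ t s h
        _ ≤ B * dist s t := by
          rw [hτid s hs, hτid t ht] at *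
          rw [Real.dist_eq]
          have : s - t ≤ |s - t| := le_abs_self _
          nlinarith
  refine ⟨γ, hlips.continuousOn, ?_, ?_, ?_⟩
  · rw [hγ0]; exact mem_ball_self (by linarith)
  · rw [hγ1]; exact mem_ball_self (by linarith)
  · have hvar : eVariationOn γ (Set.Icc 0 1) ≤
        (Real.toNNReal B : ℝ≥0∞) * eVariationOn (id : ℝ → ℝ) (Set.Icc 0 1) := by
      have := hlips.comp_eVariationOn_le (g := (id : ℝ → ℝ)) (s := Set.Icc (0:ℝ) 1)
        (Set.mapsTo_id _)
      simpa [Function.comp_id] using this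
    have hid : eVariationOn (id : ℝ → ℝ) (Set.Icc 0 1) ≤ ENNReal.ofReal 1 := by
      have hmono : MonotoneOn (id : ℝ → ℝ) (Set.Icc 0 1) := fun a _ b _ hab => hab
      have := hmono.eVariationOn_le (a := 0) (b := 1)
        (Set.left_mem_Icc.mpr zero_le_one) (Set.right_mem_Icc.mpr zero_le_one)
      rw [Set.inter_self] at this
      simpa using this
    calc eVariationOn γ (Set.Icc 0 1) ≤
          (Real.toNNReal B : ℝ≥0∞) * eVariationOn (id : ℝ → ℝ) (Set.Icc 0 1) := hvar
      _ ≤ (Real.toNNReal B : ℝ≥0∞) * ENNReal.ofReal 1 := mul_le_mul_right hid _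
      _ = ENNReal.ofReal B := by rw [ENNReal.ofReal_one, mul_one, ENNReal.ofReal]
      _ = ENNReal.ofReal ((33 * (max (Cμ:ℝ) 1)^2 * L) * dist p₀ q₀) := by
          rw [hB, hA, hrdef]

end Curve
end QB

/-- Lemma A.2: in a complete doubling `p`-Poincaré space there is a curve
of controlled length joining the ball `B(p₀, r/4)` to the ball `B(q₀, r/4)`, where
`r = d(p₀,q₀)`. -/
theorem exists_curve_joining_quarter_balls
    (Cμ : ℝ≥0) (L p : ℝ) (hL : 1 ≤ L) (hp : 1 ≤ p) :
    ∃ C : ℝ, 0 < C ∧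
      ∀ (X : Type) [MetricSpace X] [CompleteSpace X] [MeasurableSpace X] [BorelSpace X]
        (μ : Measure X),
        DoublingWith μ Cμ → PoincareIneq μ p L →
        ∀ p₀ q₀ : X, 0 < dist p₀ q₀ →
          ∃ γ : ℝ → X,
            ContinuousOn γ (Set.Icc 0 1) ∧
            γ 0 ∈ Metric.ball p₀ (dist p₀ q₀ / 4) ∧
            γ 1 ∈ Metric.ball q₀ (dist p₀ q₀ / 4) ∧
            eVariationOn γ (Set.Icc 0 1) ≤ ENNReal.ofReal (C * dist p₀ q₀) := by
  have h1 : (0:ℝ) < max (Cμ:ℝ) 1 := lt_of_lt_of_le one_pos (le_max_right _ _)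
  have hL0 : (0:ℝ) < L := lt_of_lt_of_le one_pos hL
  have hCpos : 0 < 33 * (max (Cμ:ℝ) 1)^2 * L := by positivity
  refine ⟨33 * (max (Cμ:ℝ) 1)^2 * L, hCpos, ?_⟩
  intro X _ _ _ _ μ hD hP p₀ q₀ hdist
  exact QB.main_curve μ hL hp hD hP.1 hP.2 p₀ q₀ hdist
end

section
/- Let (X,d,μ) be a metric measure space with μ Borel regular and doubling, admitting a p-Poincaré inequality with constant L ≥ 1 for some p ≥ 1. Then there is a constant C < ∞, depending only on the doubling constant, L and p, such that for all p₀, q₀ ∈ X with r = d(p₀,q₀) > 0 and every ε > 0, there exists an ε-path x₀, x₁, …, x_k in X with x₀ ∈ B(p₀, r/4), x_k ∈ B(q₀, r/4), and total length Σ_{i=1}^{k} d(x_{i−1}, x_i) ≤ C·d(p₀,q₀). -/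
open Metric MeasureTheory Filter Set
open scoped NNReal ENNReal

lemma doublingWith_pow {X : Type*} [MetricSpace X] [MeasurableSpace X] {μ : Measure X}
    {C : ℝ≥0} (h : DoublingWith μ C) (x : X) {s : ℝ} (hs : 0 < s) (n : ℕ) :
    μ (Metric.ball x (2 ^ n * s)) ≤ (C : ℝ≥0∞) ^ n * μ (Metric.ball x s) := by
  induction n with
  | zero => simp
  | succ n ih =>
    have h2 : (2:ℝ) ^ (n+1) * s = 2 * (2 ^ n * s) := by ring
    rw [h2]
    calc μ (Metric.ball x (2 * (2 ^ n * s))) ≤ (C:ℝ≥0∞) * μ (Metric.ball x (2 ^ n * s)) :=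
          h x _ (by positivity)
      _ ≤ (C:ℝ≥0∞) * ((C:ℝ≥0∞) ^ n * μ (Metric.ball x s)) := mul_le_mul_right ih _
      _ = (C:ℝ≥0∞) ^ (n+1) * μ (Metric.ball x s) := by ring


/-- in a doubling `p`-Poincaré space, for every `ε > 0` there is an `ε`-path
of controlled length from `B(p₀, r/4)` to `B(q₀, r/4)`, where `r = d(p₀,q₀)`. -/
theorem exists_eps_path_joining_quarter_balls
    (Cμ : ℝ≥0) (L p : ℝ) (hL : 1 ≤ L) (hp : 1 ≤ p) :
    ∃ C : ℝ, 0 < C ∧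
      ∀ (X : Type) [MetricSpace X] [MeasurableSpace X] [BorelSpace X] (μ : Measure X),
        DoublingWith μ Cμ → PoincareIneq μ p L →
        ∀ p₀ q₀ : X, 0 < dist p₀ q₀ → ∀ ε : ℝ, 0 < ε →
          ∃ (k : ℕ) (pts : Fin (k + 1) → X),
            pts 0 ∈ Metric.ball p₀ (dist p₀ q₀ / 4) ∧
            pts (Fin.last k) ∈ Metric.ball q₀ (dist p₀ q₀ / 4) ∧
            (∀ i : Fin k, dist (pts i.castSucc) (pts i.succ) < ε) ∧
            (∑ i : Fin k, dist (pts i.castSucc) (pts i.succ)) ≤ C * dist p₀ q₀ := by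
  classical
  have hL0 : (0:ℝ) < L := lt_of_lt_of_le one_pos hL
  have hCn1 : (1:ℝ) ≤ ((max Cμ 1 : ℝ≥0) : ℝ) := by exact_mod_cast le_max_right Cμ 1
  have hCn0 : (0:ℝ) < ((max Cμ 1 : ℝ≥0) : ℝ) := lt_of_lt_of_le one_pos hCn1
  refine ⟨4 * L * ((max Cμ 1 : ℝ≥0) : ℝ) ^ 4, by positivity, ?_⟩
  intro X _ _ _ μ hdb hpi p₀ q₀ hr ε hε
  obtain ⟨hpos, hpoin⟩ := hpi
  set Cn : ℝ≥0 := max Cμ 1 with hCndef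
  have hdb' : DoublingWith μ Cn := fun x s hs =>
    (hdb x s hs).trans (mul_le_mul_left (by exact_mod_cast le_max_left Cμ 1) _)
  set r : ℝ := dist p₀ q₀ with hrdef
  set M : ℝ := 4 * L * (Cn:ℝ) ^ 4 * r with hMdef
  have hM0 : 0 < M := by positivity
  set S : X → Set ℝ := fun x => {l | ∃ k : ℕ, ∃ pts : Fin (k+1) → X,
      pts 0 ∈ Metric.ball p₀ (r/4) ∧ pts (Fin.last k) = x ∧
      (∀ i : Fin k, dist (pts i.castSucc) (pts i.succ) < ε) ∧
      l = ∑ i : Fin k, dist (pts i.castSucc) (pts i.succ)} with hSdef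
  set u : X → ℝ := fun x => sInf (insert M (S x)) with hudef
  have hSnn : ∀ x : X, ∀ l ∈ insert M (S x), (0:ℝ) ≤ l := by
    intro x l hl
    rcases hl with rfl | ⟨k, pts, _, _, _, rfl⟩
    · exact hM0.le
    · exact Finset.sum_nonneg fun i _ => dist_nonneg
  have hbdd : ∀ x : X, BddBelow (insert M (S x)) := fun x => ⟨0, hSnn x⟩
  have hne : ∀ x : X, (insert M (S x)).Nonempty := fun x => ⟨M, mem_insert _ _⟩
  have hu_le_M : ∀ x : X, u x ≤ M := fun x => csInf_le (hbdd x) (mem_insert _ _)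
  have hu_nonneg : ∀ x : X, 0 ≤ u x := fun x => le_csInf (hne x) (hSnn x)
  have hu_zero : ∀ x ∈ Metric.ball p₀ (r/4), u x = 0 := by
    intro x hx
    have h0 : (0:ℝ) ∈ S x := ⟨0, fun _ => x, hx, rfl, fun i => i.elim0, by simp⟩
    exact le_antisymm (csInf_le (hbdd x) (mem_insert_of_mem _ h0)) (hu_nonneg x)
  have hext : ∀ x y : X, dist x y < ε → ∀ l ∈ S x, l + dist x y ∈ S y := by
    intro x y hxy l hl
    obtain ⟨k, pts, h0, hlast, hsteps, rfl⟩ := hl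
    refine ⟨k+1, Fin.snoc pts y, ?_, Fin.snoc_last _ _, ?_, ?_⟩
    · rw [show (0 : Fin (k+2)) = Fin.castSucc (0 : Fin (k+1)) from rfl, Fin.snoc_castSucc]
      exact h0
    · intro i
      refine Fin.lastCases ?_ ?_ i
      · rw [Fin.succ_last, Fin.snoc_last, Fin.snoc_castSucc, hlast]
        exact hxy
      · intro j
        rw [Fin.succ_castSucc, Fin.snoc_castSucc, Fin.snoc_castSucc]
        exact hsteps j
    · rw [Fin.sum_univ_castSucc]
      congr 1
      · refine Finset.sum_congr rfl fun j _ => ?_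
        rw [Fin.succ_castSucc, Fin.snoc_castSucc, Fin.snoc_castSucc]
      · rw [Fin.succ_last, Fin.snoc_last, Fin.snoc_castSucc, hlast]
  have hstep : ∀ x y : X, dist x y < ε → u y ≤ u x + dist x y := by
    intro x y hxy
    have h1 : u y - dist x y ≤ u x := by
      refine le_csInf (hne x) ?_
      intro l hl
      rw [sub_le_iff_le_add]
      rcases hl with rfl | hl
      · exact (hu_le_M y).trans (le_add_of_nonneg_right dist_nonneg)
      · exact csInf_le (hbdd y) (mem_insert_of_mem _ (hext x y hxy l hl))
    linarith
  have habs : ∀ x y : X, dist x y < ε → |u y - u x| ≤ dist x y := by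
    intro x y hxy
    rw [abs_sub_le_iff]
    constructor
    · have := hstep x y hxy; linarith
    · have h2 := hstep y x (by rwa [dist_comm]); rw [dist_comm] at h2; linarith
  set K₀ : ℝ := max 1 (M / ε) with hK₀def
  have hK₀1 : (1:ℝ) ≤ K₀ := le_max_left _ _
  have hK₀0 : (0:ℝ) ≤ K₀ := zero_le_one.trans hK₀1
  have hdistK : ∀ x y : X, |u y - u x| ≤ K₀ * dist x y := by
    intro x y
    rcases lt_or_ge (dist x y) ε with h | h
    · calc |u y - u x| ≤ dist x y := habs x y h
        _ ≤ K₀ * dist x y := le_mul_of_one_le_left dist_nonneg hK₀1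
    · have h1 : |u y - u x| ≤ M := by
        rw [abs_sub_le_iff]
        constructor
        · have h2 := hu_nonneg x; have h3 := hu_le_M y; linarith
        · have h2 := hu_nonneg y; have h3 := hu_le_M x; linarith
      calc |u y - u x| ≤ M := h1
        _ = (M / ε) * ε := by field_simp
        _ ≤ (M / ε) * dist x y := mul_le_mul_of_nonneg_left h (by positivity)
        _ ≤ K₀ * dist x y := mul_le_mul_of_nonneg_right (le_max_right _ _) dist_nonneg
  have hIsLip : IsLip u := by
    refine ⟨⟨K₀, hK₀0⟩, LipschitzWith.of_dist_le_mul fun x y => ?_⟩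
    rw [Real.dist_eq, abs_sub_comm]
    exact hdistK x y
  -- varBall bounds
  have hvar_mem_le : ∀ (x : X) (ρ : ℝ), 0 < ρ →
      ∀ a ∈ (fun y => |u y - u x| / ρ) '' Metric.ball x ρ, a ≤ K₀ := by
    rintro x ρ hρ a ⟨y, hy, rfl⟩
    rw [Metric.mem_ball, dist_comm] at hy
    rw [div_le_iff₀ hρ]
    calc |u y - u x| ≤ K₀ * dist x y := hdistK x y
      _ ≤ K₀ * ρ := mul_le_mul_of_nonneg_left hy.le hK₀0
  have hvar_le_one : ∀ (x : X) (ρ : ℝ), 0 < ρ → ρ ≤ ε → varBall u x ρ ≤ 1 := by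
    intro x ρ hρ hρε
    refine Real.sSup_le ?_ zero_le_one
    rintro a ⟨y, hy, rfl⟩
    rw [Metric.mem_ball, dist_comm] at hy
    rw [div_le_one hρ]
    exact (habs x y (lt_of_lt_of_le hy hρε)).trans hy.le
  have hvar_nonneg : ∀ (x : X) (ρ : ℝ), 0 < ρ → 0 ≤ varBall u x ρ := by
    intro x ρ hρ
    have h0 : (0:ℝ) ∈ (fun y => |u y - u x| / ρ) '' Metric.ball x ρ :=
      ⟨x, Metric.mem_ball_self hρ, by simp⟩
    exact le_csSup ⟨K₀, hvar_mem_le x ρ hρ⟩ h0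
  have hvar_le_K : ∀ (x : X) (ρ : ℝ), 0 < ρ → varBall u x ρ ≤ K₀ := fun x ρ hρ =>
    Real.sSup_le (hvar_mem_le x ρ hρ) hK₀0
  have hev_pos : ∀ᶠ ρ in nhdsWithin 0 (Set.Ioi (0:ℝ)), 0 < ρ := eventually_mem_nhdsWithin
  have hev_lt : ∀ᶠ ρ in nhdsWithin 0 (Set.Ioi (0:ℝ)), ρ < ε :=
    Filter.Eventually.filter_mono nhdsWithin_le_nhds (Filter.Tendsto.eventually_lt_const hε tendsto_id)
  have hlip_le_one : ∀ x : X, lipLow u x ≤ 1 := by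
    intro x
    rw [lipLow, Filter.liminf_eq]
    refine Real.sSup_le ?_ zero_le_one
    intro a ha
    simp only [Set.mem_setOf_eq] at ha
    obtain ⟨ρ, h1, h2, h3⟩ := (ha.and (hev_pos.and hev_lt)).exists
    exact h1.trans (hvar_le_one x ρ h2 h3.le)
  have hlip_nonneg : ∀ x : X, 0 ≤ lipLow u x := by
    intro x
    rw [lipLow, Filter.liminf_eq]
    refine le_csSup ?_ ?_
    · refine ⟨K₀, ?_⟩
      intro a ha
      simp only [Set.mem_setOf_eq] at ha
      obtain ⟨ρ, h1, h2⟩ := (ha.and hev_pos).exists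
      exact h1.trans (hvar_le_K x ρ h2)
    · show (0:ℝ) ∈ {a | ∀ᶠ ρ in nhdsWithin 0 (Set.Ioi (0:ℝ)), a ≤ varBall u x ρ}
      simp only [Set.mem_setOf_eq]
      exact hev_pos.mono fun ρ hρ => hvar_nonneg x ρ hρ
  -- case split on whether a good chain reaches B(q₀, r/4)
  by_cases hEx : ∃ x ∈ Metric.ball q₀ (r/4), u x < M
  · obtain ⟨x, hx, hux⟩ := hEx
    obtain ⟨l, hl, hlM⟩ := exists_lt_of_csInf_lt (hne x) hux
    have hlS : l ∈ S x := by
      rcases hl with rfl | hl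
      · exact absurd hlM (lt_irrefl _)
      · exact hl
    obtain ⟨k, pts, h0, hlast, hsteps, hsum⟩ := hlS
    refine ⟨k, pts, h0, ?_, hsteps, ?_⟩
    · rw [hlast]; exact hx
    · rw [← hsum]
      exact le_of_lt (by rw [hMdef] at hlM; exact hlM)
  · -- derive a contradiction from the Poincaré inequality
    exfalso
    push_neg at hEx
    have hMq : ∀ x ∈ Metric.ball q₀ (r/4), u x = M := fun x hx =>
      le_antisymm (hu_le_M x) (hEx x hx)
    set B : Set X := Metric.ball p₀ (2*r) with hBdef
    set Bp : Set X := Metric.ball p₀ (r/4) with hBpdef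
    set Bq : Set X := Metric.ball q₀ (r/4) with hBqdef
    obtain ⟨hBpos, hBfin⟩ := hpos p₀ (2*r) (by positivity)
    have hBpB : Bp ⊆ B := Metric.ball_subset_ball (by linarith)
    have hBqB : Bq ⊆ B := Metric.ball_subset_ball' (by
      show r/4 + dist q₀ p₀ ≤ 2*r
      rw [dist_comm, ← hrdef]; linarith)
    have hdisj : Disjoint Bp Bq := Metric.ball_disjoint_ball (by
      show r/4 + r/4 ≤ dist p₀ q₀
      rw [← hrdef]; linarith)
    -- measure estimates
    have hma : μ B ≤ (Cn:ℝ≥0∞)^3 * μ Bp := by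
      have h8 : (2:ℝ)*r = 2^3 * (r/4) := by ring
      rw [hBdef, h8]
      exact doublingWith_pow hdb' p₀ (by positivity) 3
    have hmb : μ B ≤ (Cn:ℝ≥0∞)^4 * μ Bq := by
      have hsub : B ⊆ Metric.ball q₀ (2^4 * (r/4)) := by
        apply Metric.ball_subset_ball'
        show 2*r + dist p₀ q₀ ≤ 2^4 * (r/4)
        rw [← hrdef]; linarith
      exact (measure_mono hsub).trans (doublingWith_pow hdb' q₀ (by positivity) 4)
    have hBpfin : μ Bp < ⊤ := lt_of_le_of_lt (measure_mono hBpB) hBfin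
    have hBqfin : μ Bq < ⊤ := lt_of_le_of_lt (measure_mono hBqB) hBfin
    set A : ℝ := (μ B).toReal with hAdef
    set a : ℝ := (μ Bp).toReal with hadef
    set b : ℝ := (μ Bq).toReal with hbdef
    have hA0 : 0 < A := ENNReal.toReal_pos hBpos.ne' hBfin.ne
    have ha0 : 0 < a := ENNReal.toReal_pos (hpos p₀ (r/4) (by positivity)).1.ne' hBpfin.ne
    have hb0 : 0 < b := ENNReal.toReal_pos (hpos q₀ (r/4) (by positivity)).1.ne' hBqfin.ne
    have haA : A ≤ (Cn:ℝ)^3 * a := by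
      have h1 := ENNReal.toReal_mono
        (ENNReal.mul_ne_top (ENNReal.pow_ne_top ENNReal.coe_ne_top) hBpfin.ne) hma
      rwa [ENNReal.toReal_mul, ENNReal.toReal_pow, ENNReal.coe_toReal] at h1
    have hbA : A ≤ (Cn:ℝ)^4 * b := by
      have h1 := ENNReal.toReal_mono
        (ENNReal.mul_ne_top (ENNReal.pow_ne_top ENNReal.coe_ne_top) hBqfin.ne) hmb
      rwa [ENNReal.toReal_mul, ENNReal.toReal_pow, ENNReal.coe_toReal] at h1
    -- Poincaré inequality for u on B
    have hkey := hpoin u hIsLip p₀ (2*r) (by positivity)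
    set c : ℝ := ⨍ z in B, u z ∂μ with hcdef
    -- RHS bound
    set B' : Set X := Metric.ball p₀ (L * (2*r)) with hB'def
    obtain ⟨hB'pos, hB'fin⟩ := hpos p₀ (L*(2*r)) (by positivity)
    have havg_le : (⨍ z in B', (lipLow u z) ^ p ∂μ) ≤ 1 := by
      rw [setAverage_eq]
      have hint : ∫ z in B', (lipLow u z) ^ p ∂μ ≤ ∫ z in B', (1:ℝ) ∂μ := by
        refine integral_mono_of_nonneg ?_ (integrableOn_const hB'fin.ne) ?_
        · exact Filter.Eventually.of_forall fun z => Real.rpow_nonneg (hlip_nonneg z) p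
        · exact Filter.Eventually.of_forall fun z =>
            Real.rpow_le_one (hlip_nonneg z) (hlip_le_one z) (by positivity)
      have h1 : ∫ z in B', (1:ℝ) ∂μ = (μ B').toReal := by simp; rfl
      rw [smul_eq_mul]
      calc (μ B').toReal⁻¹ * ∫ z in B', (lipLow u z) ^ p ∂μ
          ≤ (μ B').toReal⁻¹ * (μ B').toReal := by
            apply mul_le_mul_of_nonneg_left (hint.trans_eq h1) (by positivity)
        _ = 1 := by
            rw [inv_mul_cancel₀ (ENNReal.toReal_pos hB'pos.ne' hB'fin.ne).ne']
    have havg_nonneg : 0 ≤ ⨍ z in B', (lipLow u z) ^ p ∂μ := by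
      rw [setAverage_eq, smul_eq_mul]
      apply mul_nonneg (by positivity)
      exact integral_nonneg fun z => Real.rpow_nonneg (hlip_nonneg z) p
    have hRHS : L * (2*r) * (⨍ z in B', (lipLow u z) ^ p ∂μ) ^ (1/p) ≤ L * (2*r) := by
      have h1 : (⨍ z in B', (lipLow u z) ^ p ∂μ) ^ (1/p) ≤ 1 :=
        Real.rpow_le_one havg_nonneg havg_le (by positivity)
      calc L * (2*r) * (⨍ z in B', (lipLow u z) ^ p ∂μ) ^ (1/p)
          ≤ L * (2*r) * 1 := mul_le_mul_of_nonneg_left h1 (by positivity)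
        _ = L * (2*r) := mul_one _
    -- LHS lower bound
    have hui : IntegrableOn u B μ := by
      obtain ⟨K, hK⟩ := hIsLip
      refine Integrable.mono'
        (show IntegrableOn (fun _ : X => M) B μ from integrableOn_const hBfin.ne)
        (hK.continuous.aestronglyMeasurable.restrict) ?_
      refine Filter.Eventually.of_forall fun x => ?_
      rw [Real.norm_eq_abs, abs_of_nonneg (hu_nonneg x)]
      exact hu_le_M x
    have huic : IntegrableOn (fun y => |u y - c|) B μ :=
      (hui.sub (integrableOn_const hBfin.ne)).abs
    have hsplit : ∫ y in Bp ∪ Bq, |u y - c| ∂μ ≤ ∫ y in B, |u y - c| ∂μ := by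
      refine setIntegral_mono_set huic ?_ ?_
      · exact Filter.Eventually.of_forall fun y => abs_nonneg _
      · exact HasSubset.Subset.eventuallyLE (union_subset hBpB hBqB)
    have hunion : ∫ y in Bp ∪ Bq, |u y - c| ∂μ
        = ∫ y in Bp, |u y - c| ∂μ + ∫ y in Bq, |u y - c| ∂μ :=
      setIntegral_union hdisj measurableSet_ball (huic.mono_set hBpB) (huic.mono_set hBqB)
    have hIp : ∫ y in Bp, |u y - c| ∂μ = |c| * a := by
      have h1 : ∫ y in Bp, |u y - c| ∂μ = ∫ _ in Bp, |(0:ℝ) - c| ∂μ := by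
        refine setIntegral_congr_fun measurableSet_ball fun y hy => ?_
        rw [hu_zero y hy]
      rw [h1, setIntegral_const, smul_eq_mul, zero_sub, abs_neg, mul_comm]
      rfl
    have hIq : ∫ y in Bq, |u y - c| ∂μ = |M - c| * b := by
      have h1 : ∫ y in Bq, |u y - c| ∂μ = ∫ _ in Bq, |M - c| ∂μ := by
        refine setIntegral_congr_fun measurableSet_ball fun y hy => ?_
        rw [hMq y hy]
      rw [h1, setIntegral_const, smul_eq_mul, mul_comm]
      rfl
    have hLHS : M / (Cn:ℝ)^4 ≤ ⨍ y in B, |u y - c| ∂μ := by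
      rw [setAverage_eq, smul_eq_mul]
      have h2 : |c| + |M - c| ≥ M := by
        have := abs_nonneg c
        have h3 : M - c ≤ |M - c| := le_abs_self _
        have h4 : c ≤ |c| := le_abs_self c
        linarith
      have hCn4 : (0:ℝ) < (Cn:ℝ)^4 := by positivity
      have haA' : A / (Cn:ℝ)^4 ≤ a := by
        rw [div_le_iff₀ hCn4]
        have h5 : (Cn:ℝ)^3 * a ≤ (Cn:ℝ)^4 * a := by
          apply mul_le_mul_of_nonneg_right _ ha0.le
          exact pow_le_pow_right₀ (by linarith) (by norm_num)
        calc A ≤ (Cn:ℝ)^3 * a := haA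
          _ ≤ (Cn:ℝ)^4 * a := h5
          _ = a * (Cn:ℝ)^4 := mul_comm _ _
      have hbA' : A / (Cn:ℝ)^4 ≤ b := by
        rw [div_le_iff₀ hCn4]
        calc A ≤ (Cn:ℝ)^4 * b := hbA
          _ = b * (Cn:ℝ)^4 := mul_comm _ _
      have hint_lb : A / (Cn:ℝ)^4 * M ≤ ∫ y in B, |u y - c| ∂μ := by
        have h6 : A / (Cn:ℝ)^4 * M ≤ |c| * a + |M - c| * b := by
          have h7 : |c| * (A / (Cn:ℝ)^4) ≤ |c| * a :=
            mul_le_mul_of_nonneg_left haA' (abs_nonneg c)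
          have h8 : |M - c| * (A / (Cn:ℝ)^4) ≤ |M - c| * b :=
            mul_le_mul_of_nonneg_left hbA' (abs_nonneg _)
          nlinarith [abs_nonneg c, abs_nonneg (M - c), div_pos hA0 hCn4]
        calc A / (Cn:ℝ)^4 * M ≤ |c| * a + |M - c| * b := h6
          _ = ∫ y in Bp ∪ Bq, |u y - c| ∂μ := by rw [hunion, hIp, hIq]
          _ ≤ ∫ y in B, |u y - c| ∂μ := hsplit
      calc M / (Cn:ℝ)^4 = A⁻¹ * (A / (Cn:ℝ)^4 * M) := by
            field_simp
        _ ≤ A⁻¹ * ∫ y in B, |u y - c| ∂μ :=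
            mul_le_mul_of_nonneg_left hint_lb (by positivity)
    -- combine
    have hfinal : M / (Cn:ℝ)^4 ≤ L * (2*r) := le_trans hLHS (hkey.trans hRHS)
    rw [hMdef] at hfinal
    have h9 : 4 * L * (Cn:ℝ)^4 * r / (Cn:ℝ)^4 = 4 * L * r := by
      have : ((Cn:ℝ))^4 ≠ 0 := by positivity
      field_simp
    rw [h9] at hfinal
    have hc1 : (0:ℝ) < L * r := mul_pos hL0 hr
    linarith only [hc1, hfinal]
end
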